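/- Let Γ be a two-dimensional book-embedding of a biconnected weighted graph G = (V,E,ω) whose area (the area of the bounding box of the union of the rectangles R(e)) equals Σ_{e∈E} ω(e). Say that an edge e1 directly wraps around an edge e2 in the supporting book-embedding L if e1 wraps around e2 and there is no edge e3 with e1 wrapping around e3 and e3 wrapping around e2. Then for every edge e ∈ E, if e_1, …, e_k are the edges that e directly wraps around, we have y_min(e) = y_max(e_1) = ⋯ = y_max(e_k). -/

import Mathlib

namespace Schematic

/-- A 1-page book-embedding of `G`: vertices are linearly ordered via an injective
real-valued placement `f`, and no two edges cross. -/
def IsBE {V : Type*} (G : SimpleGraph V) (f : V → ℝ) : Prop :=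
  Function.Injective f ∧
  ∀ a b c d : V, G.Adj a b → G.Adj c d → ¬ (f a < f c ∧ f c < f b ∧ f b < f d)

/-- Edge `(u,v)` wraps around edge `(w,z)` (equivalently, `(w,z)` is nested into `(u,v)`),
where `(w,z)` is written in increasing order. -/
def Wraps {V : Type*} (G : SimpleGraph V) (f : V → ℝ) (u v w z : V) : Prop :=
  G.Adj u v ∧ G.Adj w z ∧ s(u, v) ≠ s(w, z) ∧
  f u ≤ f w ∧ f w < f z ∧ f z ≤ f v

/-- A graph is biconnected if it has at least 3 vertices, is connected,
and deleting any single vertex leaves a connected graph. -/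
def IsBiconnected {V : Type*} (G : SimpleGraph V) : Prop :=
  3 ≤ Nat.card V ∧ G.Connected ∧
  ∀ v : V, (G.induce (({v} : Set V)ᶜ)).Connected

/-- A two-dimensional book-embedding of a weighted graph: a supporting 1-page
book-embedding given by the x-coordinates `x`, and for each edge `(u,v)` with `u ≺ v`
a rectangle `[x u, x v] × [ylo u v, yhi u v]` with `ylo u v ≥ 0`, area equal to the
weight of the edge, and `ylo u v` equal to the maximum of `yhi` over the edges nested
into `(u,v)` (`0` if there is no such edge). -/
def IsTwoDimBE {V : Type*} (G : SimpleGraph V) (ω : V → V → ℝ)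
    (x : V → ℝ) (ylo yhi : V → V → ℝ) : Prop :=
  IsBE G x ∧
  (∀ u v : V, ylo u v = ylo v u) ∧
  (∀ u v : V, yhi u v = yhi v u) ∧
  (∀ u v : V, G.Adj u v → 0 ≤ ylo u v) ∧
  (∀ u v : V, G.Adj u v → x u < x v →
    (x v - x u) * (yhi u v - ylo u v) = ω u v) ∧
  (∀ u v : V, G.Adj u v → x u < x v →
    (∀ w z : V, Wraps G x u v w z → yhi w z ≤ ylo u v) ∧
    ((∃ w z : V, Wraps G x u v w z ∧ ylo u v = yhi w z) ∨
     ((¬ ∃ w z : V, Wraps G x u v w z) ∧ ylo u v = 0)))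

open Classical in
/-- The sum of the weights of all edges of `G` (each unordered edge counted once,
in its `f`-increasing orientation). -/
noncomputable def totalWeight {V : Type*} [Fintype V] (G : SimpleGraph V)
    (ω : V → V → ℝ) (f : V → ℝ) : ℝ :=
  ∑ p : V × V, if G.Adj p.1 p.2 ∧ f p.1 < f p.2 then ω p.1 p.2 else 0

/-- `[X₁,X₂] × [Y₁,Y₂]` is the bounding box of the two-dimensional book-embedding:
the smallest axis-parallel rectangle containing all the rectangles of the edges. -/
def IsBoundingBox {V : Type*} (G : SimpleGraph V) (x : V → ℝ) (ylo yhi : V → V → ℝ)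
    (X₁ X₂ Y₁ Y₂ : ℝ) : Prop :=
  (∀ u v : V, G.Adj u v → x u < x v →
    X₁ ≤ x u ∧ x v ≤ X₂ ∧ Y₁ ≤ ylo u v ∧ yhi u v ≤ Y₂) ∧
  (∃ u v : V, G.Adj u v ∧ x u < x v ∧ x u = X₁) ∧
  (∃ u v : V, G.Adj u v ∧ x u < x v ∧ x v = X₂) ∧
  (∃ u v : V, G.Adj u v ∧ x u < x v ∧ ylo u v = Y₁) ∧
  (∃ u v : V, G.Adj u v ∧ x u < x v ∧ yhi u v = Y₂)

/-- Edge `(u,v)` directly wraps around edge `(w,z)`. -/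
def DirectlyWraps {V : Type*} (G : SimpleGraph V) (x : V → ℝ) (u v w z : V) : Prop :=
  Wraps G x u v w z ∧ ¬ ∃ p q : V, Wraps G x u v p q ∧ Wraps G x p q w z

/-- Two distinct edges in a 1-page book-embedding either have (interior-)disjoint
x-projections or one wraps around the other. -/
lemma edge_trichotomy {V : Type*} {G : SimpleGraph V} {x : V → ℝ} (hbe : IsBE G x)
    {a b c d : V} (hab : G.Adj a b) (hcd : G.Adj c d) (h1 : x a < x b) (h2 : x c < x d)
    (hne : s(a,b) ≠ s(c,d)) :
    x b ≤ x c ∨ x d ≤ x a ∨ Wraps G x a b c d ∨ Wraps G x c d a b := by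
  obtain ⟨hinj, hcross⟩ := hbe
  rcases le_or_gt (x b) (x c) with h | hcb
  · exact Or.inl h
  rcases le_or_gt (x d) (x a) with h | had
  · exact Or.inr (Or.inl h)
  rcases le_or_gt (x a) (x c) with hac | hca
  · rcases le_or_gt (x d) (x b) with hdb | hbd
    · exact Or.inr (Or.inr (Or.inl ⟨hab, hcd, hne, hac, h2, hdb⟩))
    · rcases eq_or_lt_of_le hac with heq | hlt
      · exact Or.inr (Or.inr (Or.inr ⟨hcd, hab, Ne.symm hne, le_of_eq heq.symm, h1,
          le_of_lt hbd⟩))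
      · exact absurd ⟨hlt, hcb, hbd⟩ (hcross a b c d hab hcd)
  · rcases le_or_gt (x b) (x d) with hbd | hdb
    · exact Or.inr (Or.inr (Or.inr ⟨hcd, hab, Ne.symm hne, le_of_lt hca, h1, hbd⟩))
    · exact absurd ⟨hca, had, hdb⟩ (hcross c d a b hcd hab)

open MeasureTheory in
lemma volume_Ioo_prod (a b c d : ℝ) :
    volume (Set.Ioo a b ×ˢ Set.Ioo c d) = ENNReal.ofReal (b - a) * ENNReal.ofReal (d - c) := by
  rw [Measure.volume_eq_prod, Measure.prod_prod, Real.volume_Ioo, Real.volume_Ioo]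

open MeasureTheory in
lemma volume_Icc_prod (a b c d : ℝ) :
    volume (Set.Icc a b ×ˢ Set.Icc c d) = ENNReal.ofReal (b - a) * ENNReal.ofReal (d - c) := by
  rw [Measure.volume_eq_prod, Measure.prod_prod, Real.volume_Icc, Real.volume_Icc]

/-- in an area-optimal two-dimensional book-embedding of a biconnected
weighted graph, for every edge `e`, the bottom side of the rectangle of `e` is at the
same height as the top side of the rectangle of every edge that `e` directly wraps
around. -/
theorem no_holes_in_area_optimal_embedding {V : Type*} [Fintype V]
    (G : SimpleGraph V) (ω : V → V → ℝ)
    (hsym : ∀ u v, ω u v = ω v u)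
    (hpos : ∀ u v, G.Adj u v → 0 < ω u v)
    (hbi : IsBiconnected G)
    (x : V → ℝ) (ylo yhi : V → V → ℝ)
    (h2d : IsTwoDimBE G ω x ylo yhi)
    (X₁ X₂ Y₁ Y₂ : ℝ) (hbb : IsBoundingBox G x ylo yhi X₁ X₂ Y₁ Y₂)
    (harea : (X₂ - X₁) * (Y₂ - Y₁) = totalWeight G ω x)
    (u v w z : V) (hdw : DirectlyWraps G x u v w z) :
    ylo u v = yhi w z := by
  classical
  open MeasureTheory in
  obtain ⟨hBE, _hyloS, _hyhiS, _hyloNN, hAr, hNest⟩ := h2d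
  obtain ⟨hw, hnd⟩ := hdw
  obtain ⟨huv, hwz, hneuvwz, hxuw, hxwz, hxzv⟩ := hw
  have hxuv : x u < x v := lt_of_le_of_lt hxuw (lt_of_lt_of_le hxwz hxzv)
  have hge : yhi w z ≤ ylo u v :=
    (hNest u v huv hxuv).1 w z ⟨huv, hwz, hneuvwz, hxuw, hxwz, hxzv⟩
  rcases eq_or_lt_of_le hge with heq | hlt
  · exact heq.symm
  exfalso
  -- positivity of rectangle heights
  have hh : ∀ a b : V, G.Adj a b → x a < x b → ylo a b < yhi a b := by
    intro a b ha hx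
    by_contra hcon
    push_neg at hcon
    have h1 := hAr a b ha hx
    have h2 := hpos a b ha
    nlinarith [sub_pos.2 hx]
  set E : Finset (V × V) :=
    Finset.univ.filter (fun p : V × V => G.Adj p.1 p.2 ∧ x p.1 < x p.2) with hE
  set R : V × V → Set (ℝ × ℝ) :=
    fun p => Set.Ioo (x p.1) (x p.2) ×ˢ Set.Ioo (ylo p.1 p.2) (yhi p.1 p.2) with hR
  have hmemE : ∀ p : V × V, p ∈ E ↔ G.Adj p.1 p.2 ∧ x p.1 < x p.2 := by
    intro p; simp [hE]
  have hsym2 : ∀ p q : V × V, p ∈ E → q ∈ E → p ≠ q → s(p.1, p.2) ≠ s(q.1, q.2) := by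
    intro p q hp hq hpq h
    rcases Sym2.eq_iff.1 h with ⟨h1, h2⟩ | ⟨h1, h2⟩
    · exact hpq (Prod.ext h1 h2)
    · have h3 := ((hmemE p).1 hp).2
      have h4 := ((hmemE q).1 hq).2
      rw [h1, h2] at h3
      exact lt_asymm h3 h4
  -- the open rectangles of distinct edges are pairwise disjoint
  have hdisj : (E : Set (V × V)).PairwiseDisjoint R := by
    intro p hp q hq hpq
    simp only [Finset.mem_coe] at hp hq
    obtain ⟨hap, hxp⟩ := (hmemE p).1 hp
    obtain ⟨haq, hxq⟩ := (hmemE q).1 hq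
    have hs := hsym2 p q hp hq hpq
    show Disjoint (R p) (R q)
    rw [Set.disjoint_left]
    intro r hrp hrq
    simp only [hR, Set.mem_prod, Set.mem_Ioo] at hrp hrq
    obtain ⟨⟨hs1, hs2⟩, ht1, ht2⟩ := hrp
    obtain ⟨⟨hs3, hs4⟩, ht3, ht4⟩ := hrq
    rcases edge_trichotomy hBE hap haq hxp hxq hs with h | h | h | h
    · linarith
    · linarith
    · have := (hNest p.1 p.2 hap hxp).1 q.1 q.2 h
      linarith
    · have := (hNest q.1 q.2 haq hxq).1 p.1 p.2 h
      linarith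
  have hmeas : ∀ p ∈ E, MeasurableSet (R p) := fun p _ =>
    measurableSet_Ioo.prod measurableSet_Ioo
  have hsum : ∑ p ∈ E, volume (R p) = volume (⋃ p ∈ E, R p) :=
    (measure_biUnion_finset hdisj hmeas).symm
  have hvolR : ∀ p ∈ E, volume (R p) = ENNReal.ofReal (ω p.1 p.2) := by
    intro p hp
    obtain ⟨hap, hxp⟩ := (hmemE p).1 hp
    simp only [hR]
    rw [volume_Ioo_prod, ← ENNReal.ofReal_mul (by linarith), hAr p.1 p.2 hap hxp]
  set B : Set (ℝ × ℝ) := Set.Icc X₁ X₂ ×ˢ Set.Icc Y₁ Y₂ with hB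
  set H : Set (ℝ × ℝ) := Set.Ioo (x w) (x z) ×ˢ Set.Ioo (yhi w z) (ylo u v) with hH
  obtain ⟨hbb1, -⟩ := hbb
  have hRsub : ∀ p ∈ E, R p ⊆ B := by
    intro p hp
    obtain ⟨hap, hxp⟩ := (hmemE p).1 hp
    obtain ⟨b1, b2, b3, b4⟩ := hbb1 p.1 p.2 hap hxp
    simp only [hR, hB]
    exact Set.prod_mono (Set.Ioo_subset_Icc_self.trans (Set.Icc_subset_Icc b1 b2))
      (Set.Ioo_subset_Icc_self.trans (Set.Icc_subset_Icc b3 b4))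
  have hHsub : H ⊆ B := by
    obtain ⟨b1, b2, b3, b4⟩ := hbb1 w z hwz hxwz
    obtain ⟨c1, c2, c3, c4⟩ := hbb1 u v huv hxuv
    have h5 := hh w z hwz hxwz
    have h6 := hh u v huv hxuv
    simp only [hH, hB]
    exact Set.prod_mono (Set.Ioo_subset_Icc_self.trans (Set.Icc_subset_Icc b1 b2))
      (Set.Ioo_subset_Icc_self.trans (Set.Icc_subset_Icc (by linarith) (by linarith)))
  -- the hole is disjoint from every rectangle
  have hHdisjR : ∀ p ∈ E, Disjoint H (R p) := by
    intro p hp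
    obtain ⟨hap, hxp⟩ := (hmemE p).1 hp
    rw [Set.disjoint_left]
    intro r hrH hrR
    simp only [hH, hR, Set.mem_prod, Set.mem_Ioo] at hrH hrR
    obtain ⟨⟨hs1, hs2⟩, ht1, ht2⟩ := hrH
    obtain ⟨⟨hs3, hs4⟩, ht3, ht4⟩ := hrR
    by_cases heq : s(p.1, p.2) = s(w, z)
    · rcases Sym2.eq_iff.1 heq with ⟨h1, h2⟩ | ⟨h1, h2⟩
      · rw [h1, h2] at ht4; linarith
      · rw [h1, h2] at hxp; exact lt_asymm hxp hxwz
    rcases edge_trichotomy hBE hap hwz hxp hxwz heq with h | h | h | h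
    · linarith
    · linarith
    · -- p wraps around (w,z); compare p with (u,v)
      by_cases heq2 : s(p.1, p.2) = s(u, v)
      · rcases Sym2.eq_iff.1 heq2 with ⟨h1, h2⟩ | ⟨h1, h2⟩
        · rw [h1, h2] at ht3; linarith
        · rw [h1, h2] at hxp; exact lt_asymm hxp hxuv
      rcases edge_trichotomy hBE hap huv hxp hxuv heq2 with h' | h' | h' | h'
      · linarith
      · have := h.2.2.2.1
        linarith
      · have h7 := (hNest p.1 p.2 hap hxp).1 u v h'
        have h8 := hh u v huv hxuv
        linarith
      · exact hnd ⟨p.1, p.2, h', h⟩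
    · have h7 := (hNest w z hwz hxwz).1 p.1 p.2 h
      have h8 := hh w z hwz hxwz
      linarith
  have hHm : MeasurableSet H := measurableSet_Ioo.prod measurableSet_Ioo
  have hdisjUH : Disjoint (⋃ p ∈ E, R p) H := by
    rw [Set.disjoint_left]
    intro r hr hrH
    obtain ⟨p, hp, hrp⟩ := Set.mem_iUnion₂.1 hr
    exact Set.disjoint_left.1 (hHdisjR p hp) hrH hrp
  have hle : volume (⋃ p ∈ E, R p) + volume H ≤ volume B := by
    rw [← measure_union hdisjUH hHm]
    exact measure_mono (Set.union_subset (Set.iUnion₂_subset hRsub) hHsub)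
  have hBvol : volume B = ENNReal.ofReal (totalWeight G ω x) := by
    obtain ⟨b1, b2, b3, b4⟩ := hbb1 w z hwz hxwz
    have h5 := hh w z hwz hxwz
    simp only [hB]
    rw [volume_Icc_prod, ← ENNReal.ofReal_mul (by linarith), harea]
  have hTW : totalWeight G ω x = ∑ p ∈ E, ω p.1 p.2 := by
    rw [hE, Finset.sum_filter, totalWeight]
  have hsumval : ∑ p ∈ E, volume (R p) = ENNReal.ofReal (totalWeight G ω x) := by
    rw [hTW, ENNReal.ofReal_sum_of_nonneg
      (fun p hp => le_of_lt (hpos p.1 p.2 ((hmemE p).1 hp).1))]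
    exact Finset.sum_congr rfl hvolR
  have hfinal : ENNReal.ofReal (totalWeight G ω x) + volume H ≤
      ENNReal.ofReal (totalWeight G ω x) := by
    calc ENNReal.ofReal (totalWeight G ω x) + volume H
        = volume (⋃ p ∈ E, R p) + volume H := by rw [← hsum, hsumval]
      _ ≤ volume B := hle
      _ = ENNReal.ofReal (totalWeight G ω x) := hBvol
  have hH0 : volume H = 0 := by
    have h : ENNReal.ofReal (totalWeight G ω x) + volume H ≤
        ENNReal.ofReal (totalWeight G ω x) + 0 := by rw [add_zero]; exact hfinal
    exact le_antisymm (ENNReal.le_of_add_le_add_left ENNReal.ofReal_ne_top h) zero_le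
  have hHvol : volume H = ENNReal.ofReal (x z - x w) * ENNReal.ofReal (ylo u v - yhi w z) := by
    simp only [hH]; exact volume_Ioo_prod _ _ _ _
  rw [hHvol] at hH0
  have h1 : (0:ℝ) < x z - x w := by linarith
  have h2 : (0:ℝ) < ylo u v - yhi w z := by linarith
  exact (ENNReal.mul_pos (ENNReal.ofReal_pos.2 h1).ne' (ENNReal.ofReal_pos.2 h2).ne').ne' hH0

end Schematic
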